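/- Suppose F_{Y|X}(y|x) = F_ε((h(y)-g(x))/σ(x)) as above, v : ℝ^d → [0,∞) is an integrable weight function, and define λ(y) := ∫ v(x) · [(∂F_{Y|X}/∂x_j)(y|x) / (∂F_{Y|X}/∂y)(y|x)] dx, A := ∫ v(x)·(σ(x)·∂_j g(x) - g(x)·∂_j σ(x))/σ(x) dx, and B := ∫ v(x)·∂_j σ(x)/σ(x) dx, where all integrals are finite. Then λ(y) = -(A + B·h(y))/h'(y) for all y. -/

import Mathlib

open MeasureTheory

theorem stmt4 {d : ℕ} (j : Fin d)
    (h h' : ℝ → ℝ) (g σ : (Fin d → ℝ) → ℝ)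
    (gj σj : (Fin d → ℝ) → ℝ) (Fε fε : ℝ → ℝ) (v : (Fin d → ℝ) → ℝ)
    (hderiv : ∀ y, HasDerivAt h (h' y) y) (hcont : Continuous h')
    (hpos : ∀ y, 0 < h' y)
    (hgj : ∀ x : Fin d → ℝ, HasDerivAt (fun t => g (Function.update x j t)) (gj x) (x j))
    (hσj : ∀ x : Fin d → ℝ, HasDerivAt (fun t => σ (Function.update x j t)) (σj x) (x j))
    (hσpos : ∀ x, 0 < σ x)
    (hFε : ∀ e, HasDerivAt Fε (fε e) e) (hfεcont : Continuous fε)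
    (hfεpos : ∀ e, 0 < fε e)
    (hv : ∀ x, 0 ≤ v x) (hvint : Integrable v)
    (hAint : Integrable (fun x => v x * (σ x * gj x - g x * σj x) / σ x))
    (hBint : Integrable (fun x => v x * σj x / σ x)) :
    ∀ y : ℝ,
      (∫ x : Fin d → ℝ, v x *
          (deriv (fun t => Fε ((h y - g (Function.update x j t)) / σ (Function.update x j t))) (x j)
            / deriv (fun t => Fε ((h t - g x) / σ x)) y))
      = -((∫ x : Fin d → ℝ, v x * (σ x * gj x - g x * σj x) / σ x)
          + (∫ x : Fin d → ℝ, v x * σj x / σ x) * h y) / h' y := by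
  intro y
  have hne : h' y ≠ 0 := (hpos y).ne'
  have key : ∀ x : Fin d → ℝ, v x *
      (deriv (fun t => Fε ((h y - g (Function.update x j t)) / σ (Function.update x j t))) (x j)
        / deriv (fun t => Fε ((h t - g x) / σ x)) y)
      = -(v x * (σ x * gj x - g x * σj x) / σ x + v x * σj x / σ x * h y) / h' y := by
    intro x
    have hσne : σ x ≠ 0 := (hσpos x).ne'
    have hfne : fε ((h y - g x) / σ x) ≠ 0 := (hfεpos _).ne'
    have h1 : HasDerivAt (fun t => (h y - g (Function.update x j t)) / σ (Function.update x j t))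
        (((0 - gj x) * σ x - (h y - g x) * σj x) / σ x ^ 2) (x j) := by
      have := ((hasDerivAt_const (x j) (h y)).sub (hgj x)).div (hσj x)
        (by rw [Function.update_eq_self]; exact hσne)
      simpa [Function.update_eq_self, Pi.sub_def, Pi.div_def] using this
    have h2 : HasDerivAt (fun t => Fε ((h y - g (Function.update x j t)) / σ (Function.update x j t)))
        (fε ((h y - g x) / σ x) * (((0 - gj x) * σ x - (h y - g x) * σj x) / σ x ^ 2)) (x j) := by
      have := (hFε ((h y - g (Function.update x j (x j))) / σ (Function.update x j (x j)))).comp (x j) h1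
      simpa [Function.update_eq_self, Function.comp_def] using this
    have h3 : HasDerivAt (fun t => Fε ((h t - g x) / σ x))
        (fε ((h y - g x) / σ x) * (h' y / σ x)) y :=
      (hFε _).comp y (((hderiv y).sub_const (g x)).div_const (σ x))
    rw [h2.deriv, h3.deriv]
    field_simp
    ring
  simp_rw [key]
  rw [integral_div, integral_neg, integral_add hAint (hBint.mul_const _), integral_mul_const,
    neg_div]
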